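/- Let (x, ξ) ∈ ℝ⁴ × (ℝ⁴ \ {0}) and let C(x,ξ) be defined from the point–line relation Z'. Then: (1) if ξ is timelike, C(x,ξ) = ∅; (2) if ξ is spacelike, C(x,ξ) = {(x' − x⁰ v, v, ξ', x⁰(ξ' − (ξ'·v) v)) : v ∈ S¹_ξ}; (3) if ξ is lightlike (then ξ₀ ≠ 0), C(x,ξ) consists of the single point (x' + (x⁰/ξ₀) ξ', −ξ'/ξ₀, ξ', 0). -/

import Mathlib

open MeasureTheory
open scoped Real

noncomputable section

/-- Euclidean `ℝ³`. -/
abbrev E3 := EuclideanSpace ℝ (Fin 3)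

/-- Minkowski space `ℝ⁴ = ℝ × ℝ³`, points written `x = (x⁰, x')`. -/
abbrev M4 := ℝ × E3

/-- The unit sphere `S² ⊆ ℝ³`. -/
def sphere2 : Set E3 := Metric.sphere 0 1

/-- The lightlike direction `θ = (1, v) ∈ ℝ⁴` as a 4-vector of components. -/
def thvec (v : E3) : Fin 4 → ℝ := Fin.cons 1 (fun i => v i)

/-- The components `(ξ₀, ξ')` of a covector as a 4-vector. -/
def xiVec (ξ : M4) : Fin 4 → ℝ := Fin.cons ξ.1 (fun i => ξ.2 i)

/-- The Minkowski metric `η = diag(-1,1,1,1)` (its own inverse). -/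
def eta4 : Fin 4 → Fin 4 → ℝ := fun i j => if i = j then (if i = 0 then -1 else 1) else 0

/-- The circle `S¹_ξ = {v ∈ S² : ξ₀ + ξ'·v = 0}`. -/
def S1xi (ξ : M4) : Set E3 := {v | ‖v‖ = 1 ∧ ξ.1 + (inner ℝ ξ.2 v : ℝ) = 0}

/-- `C(x,ξ)`: the set of `(y, v, η, w)` in relation `Z'` with `(x, ξ)`, i.e. `v ∈ S²`,
`y = x' − x⁰v`, `η = ξ'`, `w = x⁰(ξ' − (ξ'·v)v)` and `ξ₀ = −ξ'·v`. -/
def Crel (x ξ : M4) : Set (E3 × E3 × E3 × E3) :=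
  {q | ‖q.2.1‖ = 1 ∧
    q.1 = x.2 - x.1 • q.2.1 ∧
    q.2.2.1 = ξ.2 ∧
    q.2.2.2 = x.1 • (ξ.2 - (inner ℝ ξ.2 q.2.1 : ℝ) • q.2.1) ∧
    ξ.1 = -(inner ℝ ξ.2 q.2.1 : ℝ)}

/-- Description of `C(x,ξ)`: empty for timelike `ξ`, the image of the
circle `S¹_ξ` for spacelike `ξ`, and a single point for lightlike `ξ` (where `ξ₀ ≠ 0`). -/
theorem Crel_characterization (x ξ : M4) (hξ : ξ ≠ 0) :
    (‖ξ.2‖ < |ξ.1| → Crel x ξ = ∅) ∧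
    (|ξ.1| < ‖ξ.2‖ → Crel x ξ =
      (fun v => (x.2 - x.1 • v, v, ξ.2, x.1 • (ξ.2 - (inner ℝ ξ.2 v : ℝ) • v))) '' S1xi ξ) ∧
    (|ξ.1| = ‖ξ.2‖ → ξ.1 ≠ 0 ∧
      Crel x ξ = {(x.2 + (x.1 / ξ.1) • ξ.2, -(ξ.1)⁻¹ • ξ.2, ξ.2, (0 : E3))}) := by
  refine ⟨?_, ?_, ?_⟩
  · intro h
    ext ⟨y, v, η, w⟩
    simp only [Crel, Set.mem_setOf_eq, Set.mem_empty_iff_false, iff_false, not_and]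
    intro hv _ _ _ h5
    have hcs := abs_real_inner_le_norm ξ.2 v
    rw [hv, mul_one] at hcs
    rw [h5, abs_neg] at h
    linarith
  · intro _
    ext ⟨y, v, η, w⟩
    constructor
    · rintro ⟨hv, h2, h3, h4, h5⟩
      dsimp only at hv h2 h3 h4 h5
      exact ⟨v, ⟨hv, by rw [h5]; ring⟩, by simp only [h2, h3, h4]⟩
    · rintro ⟨v', ⟨hv', hs⟩, heq⟩
      simp only [Prod.mk.injEq] at heq
      obtain ⟨e1, e2, e3, e4⟩ := heq
      subst e1; subst e2; subst e3; subst e4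
      exact ⟨hv', rfl, rfl, rfl, by dsimp only; linarith⟩
  · intro h
    have h0 : ξ.1 ≠ 0 := by
      intro hz
      apply hξ
      rw [hz, abs_zero] at h
      exact Prod.ext hz (norm_eq_zero.mp h.symm)
    refine ⟨h0, ?_⟩
    have hsq : ξ.1 ^ 2 = ‖ξ.2‖ ^ 2 := by rw [← h, sq_abs]
    have hipv : (inner ℝ ξ.2 ((-ξ.1⁻¹) • ξ.2 : E3) : ℝ) = -ξ.1 := by
      rw [neg_smul, inner_neg_right, real_inner_smul_right, real_inner_self_eq_norm_sq, ← hsq]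
      field_simp
    have hwv : x.1 • (ξ.2 - (inner ℝ ξ.2 ((-ξ.1⁻¹) • ξ.2 : E3) : ℝ) • ((-ξ.1⁻¹) • ξ.2 : E3))
        = 0 := by
      rw [hipv, smul_smul, neg_mul_neg, mul_inv_cancel₀ h0, one_smul, sub_self, smul_zero]
    have hyv : x.2 - x.1 • ((-ξ.1⁻¹) • ξ.2 : E3) = x.2 + (x.1 / ξ.1) • ξ.2 := by
      rw [neg_smul, smul_neg, sub_neg_eq_add, smul_smul, div_eq_mul_inv]
    have hnv : ‖((-ξ.1⁻¹) • ξ.2 : E3)‖ = 1 := by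
      rw [neg_smul, norm_neg, norm_smul, norm_inv, Real.norm_eq_abs, ← h]
      exact inv_mul_cancel₀ (abs_ne_zero.mpr h0)
    ext ⟨y, v, η, w⟩
    constructor
    · rintro ⟨hv, h2, h3, h4, h5⟩
      dsimp only at hv h2 h3 h4 h5
      have hvval : v = (-ξ.1⁻¹) • ξ.2 := by
        rw [neg_smul]
        have hn : ‖v + ξ.1⁻¹ • ξ.2‖ ^ 2 = 0 := by
          rw [norm_add_sq_real, real_inner_smul_right, real_inner_comm, norm_smul, mul_pow, hv]
          have hipval : (inner ℝ ξ.2 v : ℝ) = -ξ.1 := by linarith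
          rw [hipval, norm_inv, Real.norm_eq_abs]
          rw [← sq_abs ξ.1] at hsq
          field_simp
          nlinarith [sq_abs ξ.1, abs_nonneg ξ.1]
        exact eq_neg_of_add_eq_zero_left
          (norm_eq_zero.mp (pow_eq_zero_iff (n := 2) (by norm_num) |>.mp hn))
      simp only [Set.mem_singleton_iff, Prod.mk.injEq]
      refine ⟨?_, hvval, h3, ?_⟩
      · rw [h2, hvval, hyv]
      · rw [h4, hvval, hwv]
    · intro hq
      simp only [Set.mem_singleton_iff, Prod.mk.injEq] at hq
      obtain ⟨e1, e2, e3, e4⟩ := hq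
      subst e1; subst e2; subst e3; subst e4
      refine ⟨?_, ?_, rfl, ?_, ?_⟩ <;> dsimp only
      · exact hnv
      · exact hyv.symm
      · exact hwv.symm
      · rw [hipv, neg_neg]
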